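/- Define m(α, ε) = (α − 1 − 2ε^α)(1 − ε^α)² − 2ε^{α+2}(1 − ε²). Then m(2, 1/√3) = 0; moreover, on the rectangle (α, ε) ∈ (1,2) × (0, 1/√3), the function m is monotone increasing in α for each fixed ε and monotone decreasing in ε for each fixed α. -/

import Mathlib

open Real Set

/-- The quantity `m(α, ε) = (α - 1 - 2ε^α)(1 - ε^α)² - 2ε^{α+2}(1 - ε²)`
controlling the positivity of the leading term in the Carleman estimate. -/
noncomputable def mfun (α ε : ℝ) : ℝ :=
  (α - 1 - 2 * ε ^ α) * (1 - ε ^ α) ^ 2 - 2 * ε ^ (α + 2) * (1 - ε ^ 2)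

lemma mkey1 (t ε : ℝ) (ht : 0 ≤ t) (htε : t ≤ ε) (hε : ε^2 ≤ 1/3) :
    0 ≤ (1-t)^2 + 2*(1-ε)*((1-t)*(1-3*t) + ε^2 - ε^4) := by
  nlinarith [sq_nonneg (ε - t), sq_nonneg (1 - 3*ε^2), sq_nonneg t, sq_nonneg ε,
    sq_nonneg (t - 1/2), sq_nonneg (ε - 1/2), mul_nonneg ht (sub_nonneg.2 htε), sq_nonneg (t*ε)]

lemma mkey2a (α ε : ℝ) (hα : 1 ≤ α) (hε0 : 0 ≤ ε) (hε : ε^2 ≤ 1/3) :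
    0 ≤ α*(1-ε)*(α-3*ε) + (α+2)*ε^2 - (α+4)*ε^4 := by
  nlinarith [sq_nonneg (α - 2*ε), sq_nonneg (α - 1 - ε), mul_nonneg (sub_nonneg.2 hα) hε0,
    sq_nonneg (1 - 2*ε), sq_nonneg ε, mul_nonneg (mul_nonneg hε0 hε0) (sub_nonneg.2 hε),
    sq_nonneg (α-1)]

lemma mkey2 (α t ε : ℝ) (hα : 1 ≤ α) (ht : 0 ≤ t) (htε : t ≤ ε) (hε : ε^2 ≤ 1/3) :
    0 ≤ α*(1-t)*(α-3*t) + (α+2)*ε^2 - (α+4)*ε^4 := by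
  have h1 := mkey2a α ε hα (ht.trans htε) hε
  have hε0 : 0 ≤ ε := ht.trans htε
  have h2 : 0 ≤ α * ((ε-t)*((α+3) - 3*(t+ε))) := by
    have h6 : 6*ε ≤ α + 3 := by nlinarith [sq_nonneg (6*ε - 4)]
    have h7 : 0 ≤ (ε-t)*((α+3) - 3*(t+ε)) := by
      apply mul_nonneg (by linarith)
      nlinarith
    positivity
  nlinarith [h1, h2]

lemma meps_facts (ε : ℝ) (hε0 : 0 < ε) (hε1 : ε < 1/Real.sqrt 3) :
    ε < 1 ∧ ε^2 ≤ 1/3 := by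
  have hs : (1:ℝ) < Real.sqrt 3 := by
    nlinarith [Real.sq_sqrt (by norm_num : (0:ℝ) ≤ 3), Real.sqrt_nonneg 3]
  have h4 : ε * Real.sqrt 3 < 1 := (lt_div_iff₀ (by positivity)).1 hε1
  constructor
  · nlinarith
  · nlinarith [Real.sq_sqrt (by norm_num : (0:ℝ) ≤ 3), hε0.le]

lemma hasDerivAt_mfun_alpha (ε : ℝ) (hε : 0 < ε) (α : ℝ) :
    HasDerivAt (fun a => mfun a ε)
      ((1 - 2*(ε^α * Real.log ε))*(1 - ε^α)^2
        + (α - 1 - 2*ε^α) * (2*(1 - ε^α)^1 * (0 - ε^α * Real.log ε))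
        - 2*(ε^(α+2) * Real.log ε * 1)*(1 - ε^2)) α := by
  have h0 : HasDerivAt (fun a : ℝ => ε ^ a) (ε ^ α * Real.log ε) α :=
    (Real.hasStrictDerivAt_const_rpow hε α).hasDerivAt
  have h1 : HasDerivAt (fun a : ℝ => a + 2) 1 α := (hasDerivAt_id α).add_const 2
  have h2 : HasDerivAt (fun a : ℝ => ε ^ (a+2)) (ε ^ (α+2) * Real.log ε * 1) α :=
    ((Real.hasStrictDerivAt_const_rpow hε (α+2)).hasDerivAt).comp α h1
  have hA : HasDerivAt (fun a : ℝ => a - 1 - 2 * ε ^ a) (1 - 2*(ε^α * Real.log ε)) α :=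
    ((hasDerivAt_id α).sub_const 1).sub (h0.const_mul 2)
  have hB : HasDerivAt (fun a : ℝ => (1 - ε ^ a)^2)
      (2*(1 - ε^α)^1 * (0 - ε^α * Real.log ε)) α := by
    simpa [Pi.sub_def, Pi.pow_def] using ((hasDerivAt_const α (1:ℝ)).sub h0).pow 2
  have hC := hA.mul hB
  have hD := (h2.const_mul 2).mul_const (1 - ε^2)
  simpa [mfun, mul_comm, mul_assoc, mul_left_comm, Pi.sub_def, Pi.mul_def] using hC.sub hD

lemma hasDerivAt_mfun_eps (α : ℝ) (ε : ℝ) (hε : 0 < ε) :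
    HasDerivAt (fun e => mfun α e)
      ((0 - 2*(α * ε^(α-1)))*(1 - ε^α)^2
        + (α - 1 - 2*ε^α) * (2*(1 - ε^α)^1 * (0 - α * ε^(α-1)))
        - (2*((α+2) * ε^(α+2-1))*(1 - ε^2) + 2*ε^(α+2)*(0 - 2*ε))) ε := by
  have h0 : HasDerivAt (fun e : ℝ => e ^ α) (α * ε^(α-1)) ε :=
    Real.hasDerivAt_rpow_const (Or.inl hε.ne')
  have h2 : HasDerivAt (fun e : ℝ => e ^ (α+2)) ((α+2) * ε^(α+2-1)) ε :=
    Real.hasDerivAt_rpow_const (Or.inl hε.ne')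
  have h3 : HasDerivAt (fun e : ℝ => e^2) (2*ε) ε := by simpa using hasDerivAt_pow 2 ε
  have hA : HasDerivAt (fun e : ℝ => α - 1 - 2 * e ^ α) (0 - 2*(α * ε^(α-1))) ε :=
    (hasDerivAt_const ε (α-1)).sub (h0.const_mul 2)
  have hB : HasDerivAt (fun e : ℝ => (1 - e ^ α)^2)
      (2*(1 - ε^α)^1 * (0 - α * ε^(α-1))) ε := by
    simpa [Pi.sub_def, Pi.pow_def] using ((hasDerivAt_const ε (1:ℝ)).sub h0).pow 2
  have hC := hA.mul hB
  have hD := (h2.const_mul 2).mul ((hasDerivAt_const ε (1:ℝ)).sub h3)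
  simpa [mfun, mul_comm, mul_assoc, mul_left_comm, Pi.sub_def, Pi.mul_def] using hC.sub hD

lemma mderiv_alpha_nonneg (ε α : ℝ) (hε0 : 0 < ε) (hε1 : ε < 1/Real.sqrt 3) (hα1 : 1 < α) :
    0 ≤ (1 - 2*(ε^α * Real.log ε))*(1 - ε^α)^2
        + (α - 1 - 2*ε^α) * (2*(1 - ε^α)^1 * (0 - ε^α * Real.log ε))
        - 2*(ε^(α+2) * Real.log ε * 1)*(1 - ε^2) := by
  obtain ⟨hεlt1, hε2⟩ := meps_facts ε hε0 hε1
  have hsp : ε^(α+2) = ε^α * ε^2 := by rw [Real.rpow_add hε0, Real.rpow_two]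
  rw [hsp]
  set t := ε^α with hT
  have ht0 : 0 < t := Real.rpow_pos_of_pos hε0 α
  have htε : t < ε := by
    have := Real.rpow_lt_rpow_of_exponent_gt hε0 hεlt1 hα1
    rwa [Real.rpow_one] at this
  have hl : Real.log ε < 0 := Real.log_neg hε0 hεlt1
  have h5 := Real.log_le_sub_one_of_pos (inv_pos.2 hε0)
  rw [Real.log_inv] at h5
  have hlε : (-Real.log ε) * ε ≤ 1 - ε := by
    have := mul_le_mul_of_nonneg_right h5 hε0.le
    rw [sub_mul, inv_mul_cancel₀ hε0.ne'] at this
    linarith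
  have key : 0 ≤ (1-t)^2 + (2*t*(-Real.log ε))*((1-t)*(α-3*t) + ε^2*(1-ε^2)) := by
    rcases le_or_gt 0 ((1-t)*(α-3*t) + ε^2*(1-ε^2)) with hB | hB
    · have h6 : 0 ≤ 2*t*(-Real.log ε) := mul_nonneg (by positivity) (by linarith)
      nlinarith [mul_nonneg h6 hB]
    · have hcoef : 2*t*(-Real.log ε) ≤ 2*(1-ε) := by
        nlinarith [mul_le_mul_of_nonneg_right htε.le (by linarith : (0:ℝ) ≤ -Real.log ε)]
      have hmul : 2*(1-ε)*((1-t)*(α-3*t) + ε^2*(1-ε^2))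
          ≤ (2*t*(-Real.log ε))*((1-t)*(α-3*t) + ε^2*(1-ε^2)) :=
        mul_le_mul_of_nonpos_right hcoef hB.le
      have h1t : (0:ℝ) ≤ 1 - t := by linarith
      nlinarith [mkey1 t ε ht0.le htε.le hε2, hmul,
        mul_nonneg (mul_nonneg (by linarith : (0:ℝ) ≤ 1-ε) h1t) (by linarith : (0:ℝ) ≤ α-1)]
  nlinarith [key]

lemma mderiv_eps_nonpos (α ε : ℝ) (hα1 : 1 < α) (hε0 : 0 < ε) (hε1 : ε < 1/Real.sqrt 3) :
    (0 - 2*(α * ε^(α-1)))*(1 - ε^α)^2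
      + (α - 1 - 2*ε^α) * (2*(1 - ε^α)^1 * (0 - α * ε^(α-1)))
      - (2*((α+2) * ε^(α+2-1))*(1 - ε^2) + 2*ε^(α+2)*(0 - 2*ε)) ≤ 0 := by
  obtain ⟨hεlt1, hε2⟩ := meps_facts ε hε0 hε1
  have e1 := Real.rpow_add hε0 (α-1) 1
  rw [Real.rpow_one, show α - 1 + 1 = α by ring] at e1
  have e2 := Real.rpow_add hε0 (α-1) 2
  rw [Real.rpow_two, show α - 1 + 2 = α + 2 - 1 by ring] at e2
  have e3 := Real.rpow_add hε0 (α-1) 3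
  rw [show α - 1 + (3:ℝ) = α + 2 by ring, show (3:ℝ) = ((3:ℕ):ℝ) by norm_num,
    Real.rpow_natCast] at e3
  rw [e1, e2, e3]
  have hu0 : 0 < ε^(α-1) := Real.rpow_pos_of_pos hε0 _
  have hu1 : ε^(α-1) ≤ 1 := Real.rpow_le_one hε0.le hεlt1.le (by linarith)
  have htε : ε^(α-1) * ε ≤ ε := by nlinarith
  have hk := mkey2 α (ε^(α-1)*ε) ε hα1.le (by positivity) htε hε2
  nlinarith [mul_nonneg hu0.le hk]

/-- `m(2, 1/√3) = 0`; moreover on `(1,2) × (0, 1/√3)` the function `m` is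
monotone increasing in `α` and monotone decreasing in `ε`. -/
theorem mfun_properties :
    mfun 2 (1 / Real.sqrt 3) = 0 ∧
    (∀ ε ∈ Set.Ioo (0 : ℝ) (1 / Real.sqrt 3),
      MonotoneOn (fun α => mfun α ε) (Set.Ioo (1 : ℝ) 2)) ∧
    (∀ α ∈ Set.Ioo (1 : ℝ) 2,
      AntitoneOn (fun ε => mfun α ε) (Set.Ioo (0 : ℝ) (1 / Real.sqrt 3))) := by
  refine ⟨?_, ?_, ?_⟩
  · have hs : Real.sqrt 3 ^ 2 = 3 := Real.sq_sqrt (by norm_num)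
    have h1 : (1/Real.sqrt 3 : ℝ)^(2:ℝ) = 1/3 := by
      rw [Real.rpow_two, div_pow, one_pow, hs]
    have h2 : (1/Real.sqrt 3 : ℝ)^((2:ℝ)+2) = 1/9 := by
      rw [show (2:ℝ)+2 = ((4:ℕ):ℝ) by norm_num, Real.rpow_natCast, div_pow, one_pow,
        show (4:ℕ) = 2*2 by norm_num, pow_mul, hs]
      norm_num
    have h3 : (1/Real.sqrt 3 : ℝ)^2 = 1/3 := by rw [div_pow, one_pow, hs]
    rw [mfun, h1, h2, h3]
    norm_num
  · rintro ε ⟨hε0, hε1⟩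
    apply monotoneOn_of_deriv_nonneg (convex_Ioo 1 2)
    · exact fun x _ =>
        (hasDerivAt_mfun_alpha ε hε0 x).differentiableAt.continuousAt.continuousWithinAt
    · exact fun x _ =>
        (hasDerivAt_mfun_alpha ε hε0 x).differentiableAt.differentiableWithinAt
    · intro x hx
      rw [interior_Ioo] at hx
      rw [(hasDerivAt_mfun_alpha ε hε0 x).deriv]
      exact mderiv_alpha_nonneg ε x hε0 hε1 hx.1
  · rintro α ⟨hα1, hα2⟩
    apply antitoneOn_of_deriv_nonpos (convex_Ioo 0 (1/Real.sqrt 3))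
    · exact fun x hx =>
        (hasDerivAt_mfun_eps α x hx.1).differentiableAt.continuousAt.continuousWithinAt
    · intro x hx
      rw [interior_Ioo] at hx
      exact (hasDerivAt_mfun_eps α x hx.1).differentiableAt.differentiableWithinAt
    · intro x hx
      rw [interior_Ioo] at hx
      rw [(hasDerivAt_mfun_eps α x hx.1).deriv]
      exact mderiv_eps_nonpos α x hα1 hx.1 hx.2
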